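/- For any odd positive integers w1, w2, w3, any complex numbers y1, y2, and any nonnegative integer n: Σ_{k+l+m=n} (n choose k,l,m) E_{k,χ}(w1 y1) E_{l,χ}(w2 y2) T_m(w3 d − 1, χ) w1^{l+m} w2^{k+m} w3^{k+l} = w3^n Σ_{k=0}^{n} (n choose k) E_{k,χ}(w1 y1) Σ_{a=0}^{w3 d − 1} (−1)^a χ(a) E_{n−k,χ}(w2 y2 + (w2/w3) a) w1^{n−k} w2^{k}. -/

import Mathlib

open Finset

/-- The formal exponential power series `e^{ct} = Σ cⁿ tⁿ/n!` in `ℂ[[t]]`. -/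
noncomputable def expPS (c : ℂ) : PowerSeries ℂ :=
  PowerSeries.mk fun n => c ^ n / n.factorial

/-- `Σ_{a=0}^{d-1} (-1)^a χ(a) e^{at}` as a formal power series. -/
noncomputable def altSum (χ : ℤ → ℂ) (d : ℕ) : PowerSeries ℂ :=
  ∑ a ∈ Finset.range d, ((-1 : ℂ) ^ a * χ (a : ℤ)) • expPS (a : ℂ)

/-- `E` is the family of generalized Euler polynomials attached to `χ` mod `d`:
`(Σ_{n≥0} E_{n,χ}(x) tⁿ/n!) · (e^{dt}+1) = 2 e^{xt} · Σ_{a=0}^{d-1} (-1)^a χ(a) e^{at}`. -/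
def IsGenEuler (d : ℕ) (χ : ℤ → ℂ) (E : ℕ → ℂ → ℂ) : Prop :=
  ∀ x : ℂ, (PowerSeries.mk fun n => E n x / n.factorial) * (expPS (d : ℂ) + 1)
    = (2 : PowerSeries ℂ) * expPS x * altSum χ d

/-- The alternating generalized power sum `T_k(n,χ) = Σ_{a=0}^{n} (-1)^a χ(a) a^k`
(with the convention `0^0 = 1`). -/
noncomputable def altPowSum (χ : ℤ → ℂ) (k n : ℕ) : ℂ :=
  ∑ a ∈ Finset.range (n + 1), (-1 : ℂ) ^ a * χ (a : ℤ) * (a : ℂ) ^ k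

/-- The multinomial coefficient `(k+l+m)! / (k! l! m!)`. -/
def multinom (k l m : ℕ) : ℕ :=
  (k + l + m).factorial / (k.factorial * l.factorial * m.factorial)

lemma expPS_eq (c : ℂ) : expPS c = PowerSeries.rescale c (PowerSeries.exp ℂ) := by
  ext n
  simp [expPS, PowerSeries.coeff_exp, div_eq_mul_inv]

lemma expPS_mul_expPS (a b : ℂ) : expPS a * expPS b = expPS (a + b) := by
  rw [expPS_eq, expPS_eq, expPS_eq, PowerSeries.exp_mul_exp_eq_exp_add]

lemma rescale_expPS (r c : ℂ) : PowerSeries.rescale r (expPS c) = expPS (c * r) := by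
  rw [expPS_eq, expPS_eq, PowerSeries.rescale_rescale]

lemma rescale_smul' (r c : ℂ) (f : PowerSeries ℂ) :
    PowerSeries.rescale r (c • f) = c • PowerSeries.rescale r f := by
  ext n
  simp [PowerSeries.coeff_rescale, mul_left_comm]

lemma genEuler_shift {d : ℕ} {χ : ℤ → ℂ} {E : ℕ → ℂ → ℂ} (hE : IsGenEuler d χ E)
    (x c : ℂ) :
    (PowerSeries.mk fun j => E j (x + c) / j.factorial)
      = expPS c * PowerSeries.mk fun j => E j x / j.factorial := by
  have hne : (expPS (d : ℂ) + 1) ≠ 0 := by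
    intro h
    have h0 := congrArg (PowerSeries.coeff 0) h
    simp [expPS] at h0
  apply mul_right_cancel₀ hne
  conv_rhs => rw [mul_assoc, hE x]
  rw [hE (x + c), ← expPS_mul_expPS]
  ring

lemma key_id {d : ℕ} {χ : ℤ → ℂ} {E : ℕ → ℂ → ℂ} (hE : IsGenEuler d χ E)
    (hd0 : 0 < d) (w2 w3 : ℕ) (hw3 : 0 < w3) (x : ℂ) (j : ℕ) :
    ∑ l ∈ range (j + 1), (j.choose l : ℂ) * E l x * altPowSum χ (j - l) (w3 * d - 1)
        * (w2 : ℂ) ^ (j - l) * (w3 : ℂ) ^ l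
    = (w3 : ℂ) ^ j * ∑ a ∈ range (w3 * d), (-1 : ℂ) ^ a * χ (a : ℤ) *
        E j (x + (w2 : ℂ) / (w3 : ℂ) * (a : ℂ)) := by
  have hw3c : (w3 : ℂ) ≠ 0 := Nat.cast_ne_zero.mpr hw3.ne'
  set H : PowerSeries ℂ :=
    ∑ a ∈ range (w3 * d), ((-1 : ℂ) ^ a * χ (a : ℤ)) • expPS (a : ℂ) with hH
  -- the power series identity
  have hser :
      (PowerSeries.rescale (w3 : ℂ) (PowerSeries.mk fun i => E i x / i.factorial)) *
        PowerSeries.rescale (w2 : ℂ) H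
      = ∑ a ∈ range (w3 * d), ((-1 : ℂ) ^ a * χ (a : ℤ)) •
          PowerSeries.rescale (w3 : ℂ)
            (PowerSeries.mk fun i => E i (x + (w2 : ℂ) / (w3 : ℂ) * (a : ℂ)) / i.factorial) := by
    rw [hH, map_sum, Finset.mul_sum]
    refine Finset.sum_congr rfl fun a _ => ?_
    rw [genEuler_shift hE x ((w2 : ℂ) / (w3 : ℂ) * (a : ℂ)), rescale_smul', map_mul,
      rescale_expPS, rescale_expPS]
    have : (w2 : ℂ) / (w3 : ℂ) * (a : ℂ) * (w3 : ℂ) = (a : ℂ) * (w2 : ℂ) := by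
      field_simp
    rw [this, mul_smul_comm, mul_comm (expPS ((a : ℂ) * (w2 : ℂ)))]
  -- extract coefficient j
  have hc := congrArg (PowerSeries.coeff j) hser
  rw [PowerSeries.coeff_mul, Finset.Nat.sum_antidiagonal_eq_sum_range_succ_mk] at hc
  have hcoeffH : ∀ m : ℕ, PowerSeries.coeff m H
      = altPowSum χ m (w3 * d - 1) / m.factorial := by
    intro m
    have h1 : w3 * d - 1 + 1 = w3 * d := by
      have : 0 < w3 * d := Nat.mul_pos hw3 hd0
      omega
    rw [hH, map_sum, altPowSum, h1, Finset.sum_div]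
    refine Finset.sum_congr rfl fun a _ => ?_
    simp [expPS, smul_eq_mul]
    ring
  simp only [PowerSeries.coeff_rescale, PowerSeries.coeff_mk, map_sum, map_smul,
    smul_eq_mul, hcoeffH] at hc
  -- multiply hc by j!
  calc ∑ l ∈ range (j + 1), (j.choose l : ℂ) * E l x * altPowSum χ (j - l) (w3 * d - 1)
        * (w2 : ℂ) ^ (j - l) * (w3 : ℂ) ^ l
      = (j.factorial : ℂ) * ∑ l ∈ range (j + 1),
          (w3 : ℂ) ^ l * (E l x / l.factorial) *
            ((w2 : ℂ) ^ (j - l) * (altPowSum χ (j - l) (w3 * d - 1) / (j - l).factorial)) := by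
        rw [Finset.mul_sum]
        refine Finset.sum_congr rfl fun l hl => ?_
        have hl' : l ≤ j := by
          have := Finset.mem_range.mp hl; omega
        rw [Nat.cast_choose ℂ hl']
        have h1 : (l.factorial : ℂ) ≠ 0 := Nat.cast_ne_zero.mpr l.factorial_ne_zero
        have h2 : ((j - l).factorial : ℂ) ≠ 0 := Nat.cast_ne_zero.mpr (j - l).factorial_ne_zero
        field_simp
    _ = (j.factorial : ℂ) * ∑ a ∈ range (w3 * d), (-1 : ℂ) ^ a * χ (a : ℤ) *
          ((w3 : ℂ) ^ j * (E j (x + (w2 : ℂ) / (w3 : ℂ) * (a : ℂ)) / j.factorial)) := by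
        rw [hc]
    _ = (w3 : ℂ) ^ j * ∑ a ∈ range (w3 * d), (-1 : ℂ) ^ a * χ (a : ℤ) *
          E j (x + (w2 : ℂ) / (w3 : ℂ) * (a : ℂ)) := by
        have hjfac : (j.factorial : ℂ) ≠ 0 := Nat.cast_ne_zero.mpr j.factorial_ne_zero
        rw [Finset.mul_sum, Finset.mul_sum]
        refine Finset.sum_congr rfl fun a _ => ?_
        field_simp

lemma multinom_eq (k l m : ℕ) :
    multinom k l m = (k + l + m).choose k * (l + m).choose l := by
  have h1 : (k + l + m).choose k * k.factorial * (l + m).factorial = (k + l + m).factorial := by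
    have := Nat.choose_mul_factorial_mul_factorial (show k ≤ k + l + m by omega)
    simpa [show k + l + m - k = l + m by omega] using this
  have h2 : (l + m).choose l * l.factorial * m.factorial = (l + m).factorial := by
    have := Nat.choose_mul_factorial_mul_factorial (show l ≤ l + m by omega)
    simpa [show l + m - l = m by omega] using this
  have key : (k + l + m).factorial
      = ((k + l + m).choose k * (l + m).choose l) * (k.factorial * l.factorial * m.factorial) := by
    rw [← h1, ← h2]; ring
  rw [multinom, key]
  exact Nat.mul_div_cancel _ (by positivity)

/-- Identity between the two expressions (a-1(1)) and (a-1(2)) for `I(Λ²₃¹)`. -/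
theorem stmt_10 (d : ℕ) (hd : Odd d) (hd0 : 0 < d) (χ : ℤ → ℂ)
    (hper : ∀ a : ℤ, χ (a + d) = χ a)
    (hmul : ∀ a b : ℤ, χ (a * b) = χ a * χ b) (hone : χ 1 = 1)
    (hvan : ∀ a : ℤ, 1 < Int.gcd a d → χ a = 0)
    (E : ℕ → ℂ → ℂ) (hE : IsGenEuler d χ E)
    (w1 w2 w3 : ℕ) (hw1 : 0 < w1) (hw2 : 0 < w2) (hw3 : 0 < w3)
    (hw1o : Odd w1) (hw2o : Odd w2) (hw3o : Odd w3)
    (y1 y2 : ℂ) (n : ℕ) :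
    (∑ k ∈ range (n + 1), ∑ l ∈ range (n + 1 - k),
      (multinom k l (n - k - l) : ℂ) * E k ((w1 : ℂ) * y1) * E l ((w2 : ℂ) * y2) *
        altPowSum χ (n - k - l) (w3 * d - 1) *
        (w1 : ℂ) ^ (l + (n - k - l)) * (w2 : ℂ) ^ (k + (n - k - l)) * (w3 : ℂ) ^ (k + l))
    = (w3 : ℂ) ^ n * ∑ k ∈ range (n + 1),
        (n.choose k : ℂ) * E k ((w1 : ℂ) * y1) *
          (∑ a ∈ range (w3 * d), (-1 : ℂ) ^ a * χ (a : ℤ) *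
            E (n - k) ((w2 : ℂ) * y2 + (w2 : ℂ) / (w3 : ℂ) * (a : ℂ))) *
          (w1 : ℂ) ^ (n - k) * (w2 : ℂ) ^ k := by
  rw [Finset.mul_sum]
  refine Finset.sum_congr rfl fun k hk => ?_
  have hk' : k ≤ n := by have := Finset.mem_range.mp hk; omega
  have hjrange : n + 1 - k = (n - k) + 1 := by omega
  rw [hjrange]
  have hkey := key_id hE hd0 w2 w3 hw3 ((w2 : ℂ) * y2) (n - k)
  calc ∑ l ∈ range (n - k + 1),
        (multinom k l (n - k - l) : ℂ) * E k ((w1 : ℂ) * y1) * E l ((w2 : ℂ) * y2) *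
          altPowSum χ (n - k - l) (w3 * d - 1) *
          (w1 : ℂ) ^ (l + (n - k - l)) * (w2 : ℂ) ^ (k + (n - k - l)) * (w3 : ℂ) ^ (k + l)
      = ((n.choose k : ℂ) * E k ((w1 : ℂ) * y1) * (w1 : ℂ) ^ (n - k) * (w2 : ℂ) ^ k
            * (w3 : ℂ) ^ k) *
          ∑ l ∈ range (n - k + 1), ((n - k).choose l : ℂ) * E l ((w2 : ℂ) * y2) *
            altPowSum χ (n - k - l) (w3 * d - 1) * (w2 : ℂ) ^ (n - k - l) * (w3 : ℂ) ^ l := by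
        rw [Finset.mul_sum]
        refine Finset.sum_congr rfl fun l hl => ?_
        have hl' : l ≤ n - k := by have := Finset.mem_range.mp hl; omega
        have e1 : k + l + (n - k - l) = n := by omega
        have e2 : l + (n - k - l) = n - k := by omega
        rw [multinom_eq, e1, e2, pow_add (w2 : ℂ) k (n - k - l), pow_add (w3 : ℂ) k l]
        push_cast
        ring
    _ = ((n.choose k : ℂ) * E k ((w1 : ℂ) * y1) * (w1 : ℂ) ^ (n - k) * (w2 : ℂ) ^ k
            * (w3 : ℂ) ^ k) *
          ((w3 : ℂ) ^ (n - k) * ∑ a ∈ range (w3 * d), (-1 : ℂ) ^ a * χ (a : ℤ) *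
            E (n - k) ((w2 : ℂ) * y2 + (w2 : ℂ) / (w3 : ℂ) * (a : ℂ))) := by
        rw [hkey]
    _ = (w3 : ℂ) ^ n *
          ((n.choose k : ℂ) * E k ((w1 : ℂ) * y1) *
            (∑ a ∈ range (w3 * d), (-1 : ℂ) ^ a * χ (a : ℤ) *
              E (n - k) ((w2 : ℂ) * y2 + (w2 : ℂ) / (w3 : ℂ) * (a : ℂ))) *
            (w1 : ℂ) ^ (n - k) * (w2 : ℂ) ^ k) := by
        have hp : (w3 : ℂ) ^ k * (w3 : ℂ) ^ (n - k) = (w3 : ℂ) ^ n := by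
          rw [← pow_add]; congr 1; omega
        rw [← hp]
        ring
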